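/- Let α₀, δ be coprime Gaussian integers with δ = c + di, gcd(c,d) = 1, and α_k = α₀ + k·δ. Suppose that the only Gaussian primes π with ν(π) ≤ 100 dividing some element of the sequence are, for each rational prime p ≡ 1 mod 4 with p ≤ 100, exactly one prime π_p with ν(π_p) = p (no prime of norm 2, and no rational prime p ≡ 3 mod 4 with p ≤ 100, divides any α_k). Then every sequence of 100 consecutive terms α_{k+1}, …, α_{k+100} contains a term coprime to all the others. -/

import Mathlib

/-- ν(x+iy) = (x²+y²)/gcd(x,y) for a Gaussian integer. -/
def nu (β : GaussianInt) : ℤ := (β.re ^ 2 + β.im ^ 2) / Int.gcd β.re β.im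

namespace HundredAux

open Zsqrtd

/-- the split primes below 100 -/
def S : Finset ℕ := {5, 13, 17, 29, 37, 41, 53, 61, 73, 89, 97}

lemma mem_S : ∀ p < 100, Nat.Prime p → p % 4 = 1 → p ∈ S := by decide

lemma S_pos : ∀ p ∈ S, 0 < p ∧ p ≤ 100 := by decide

lemma S_sum : (∑ p ∈ S, ((99 / (p : ℤ)) + 1).toNat) = 54 := by decide

lemma exists_prime_common (β γ : GaussianInt) (hβ : β ≠ 0) (hnc : ¬ IsCoprime β γ) :
    ∃ π : GaussianInt, Prime π ∧ π ∣ β ∧ π ∣ γ := by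
  classical
  have hg0 : EuclideanDomain.gcd β γ ≠ 0 := by
    intro h0
    exact hβ (EuclideanDomain.gcd_eq_zero_iff.mp h0).1
  have hgu : ¬ IsUnit (EuclideanDomain.gcd β γ) := fun hu =>
    hnc (EuclideanDomain.gcd_isUnit_iff.mp hu)
  obtain ⟨q, hq, hqd⟩ := WfDvdMonoid.exists_irreducible_factor hgu hg0
  exact ⟨q, (UniqueFactorizationMonoid.irreducible_iff_prime).mp hq,
    hqd.trans (EuclideanDomain.gcd_dvd_left _ _),
    hqd.trans (EuclideanDomain.gcd_dvd_right _ _)⟩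

lemma exists_rat_prime_dvd (π : GaussianInt) (hπ : Prime π) :
    ∀ m : ℕ, m ≠ 0 → π ∣ (m : GaussianInt) →
      ∃ p : ℕ, p.Prime ∧ p ∣ m ∧ π ∣ (p : GaussianInt) := by
  intro m
  induction m using Nat.strong_induction_on with
  | _ m ih =>
    intro hm hdvd
    rcases eq_or_ne m 1 with rfl | hm1
    · rw [Nat.cast_one] at hdvd
      exact absurd (isUnit_of_dvd_one hdvd) hπ.not_unit
    · obtain ⟨q, hq, hqm⟩ := Nat.exists_prime_and_dvd hm1
      obtain ⟨m₂, rfl⟩ := hqm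
      have hcast : ((q * m₂ : ℕ) : GaussianInt) = (q : GaussianInt) * (m₂ : GaussianInt) := by
        push_cast; ring
      rw [hcast] at hdvd
      rcases hπ.2.2 _ _ hdvd with hd | hd
      · exact ⟨q, hq, Dvd.intro m₂ rfl, hd⟩
      · have hm₂ : m₂ ≠ 0 := by rintro rfl; simp at hm
        have hlt : m₂ < q * m₂ := by
          have h2 := hq.two_le
          have := Nat.pos_of_ne_zero hm₂
          nlinarith
        obtain ⟨p, hp, hpm, hpd⟩ := ih m₂ hlt hm₂ hd
        exact ⟨p, hp, hpm.mul_left q, hpd⟩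

lemma norm_eq_sum_sq (z : GaussianInt) : z.norm = z.re ^ 2 + z.im ^ 2 := by
  rw [Zsqrtd.norm_def]; ring

lemma key (π : GaussianInt) (hπ : Prime π) (p : ℕ) (hp : p.Prime)
    (hdvd : π ∣ (p : GaussianInt)) :
    nu π = (p : ℤ) ∧ ∀ n : ℤ, π ∣ (n : GaussianInt) → (p : ℤ) ∣ n := by
  have hp0 : (p : ℤ) ≠ 0 := by exact_mod_cast hp.ne_zero
  obtain ⟨c, hc⟩ := hdvd
  have hN : π.norm * c.norm = (p : ℤ) * p := by
    rw [← Zsqrtd.norm_mul, ← hc, Zsqrtd.norm_natCast]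
  have hπnn : 0 ≤ π.norm := Zsqrtd.norm_nonneg (by norm_num) π
  have hNdvd : π.norm.natAbs ∣ p ^ 2 := by
    have h1 : π.norm ∣ (p : ℤ) ^ 2 := ⟨c.norm, by rw [sq, ← hN]⟩
    have := Int.natAbs_dvd_natAbs.mpr h1
    simpa [Int.natAbs_pow] using this
  obtain ⟨i, hi2, hNe⟩ := (Nat.dvd_prime_pow hp).mp hNdvd
  interval_cases i
  · -- π would be a unit
    exact absurd (Zsqrtd.norm_eq_one_iff.mp (by simpa using hNe)) hπ.not_isUnit
  · -- norm π = p : split case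
    have hnorm : π.norm = (p : ℤ) := by
      rw [← Int.natAbs_of_nonneg hπnn, hNe]; simp
    have hsum : π.re ^ 2 + π.im ^ 2 = (p : ℤ) := by rw [← norm_eq_sum_sq, hnorm]
    set g : ℕ := Int.gcd π.re π.im with hg
    have hgdvd : (g : ℤ) ^ 2 ∣ (p : ℤ) := by
      rw [← hsum]
      exact dvd_add (pow_dvd_pow_of_dvd (Int.gcd_dvd_left _ _) 2)
        (pow_dvd_pow_of_dvd (Int.gcd_dvd_right _ _) 2)
    have hgdvdn : g ^ 2 ∣ p := by exact_mod_cast hgdvd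
    have hg1 : g = 1 := by
      rcases (Nat.Prime.eq_one_or_self_of_dvd hp _ hgdvdn) with hcase | hcase
      · simpa using hcase
      · -- g ^ 2 = p : impossible
        have hgp : g ∣ p := dvd_trans (dvd_pow_self g two_ne_zero) hgdvdn
        rcases (Nat.Prime.eq_one_or_self_of_dvd hp _ hgp) with h1' | h1'
        · rw [h1'] at hcase; have := hp.two_le; omega
        · rw [h1'] at hcase; nlinarith [hp.two_le]
    have hnu : nu π = (p : ℤ) := by
      rw [nu, ← hg, hg1, hsum]
      simp
    refine ⟨hnu, fun n hn => ?_⟩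
    obtain ⟨e, he⟩ := hn
    have : (p : ℤ) ∣ n * n := by
      have h2 : (n : GaussianInt).norm = π.norm * e.norm := by rw [he, Zsqrtd.norm_mul]
      rw [Zsqrtd.norm_intCast, hnorm] at h2
      exact ⟨e.norm, h2⟩
    rcases (Int.prime_iff_natAbs_prime.mpr (by simpa using hp)).dvd_mul.mp this with h | h <;> exact h
  · -- norm π = p ^ 2 : inert case, π associated to p
    have hnorm : π.norm = (p : ℤ) * p := by
      rw [← Int.natAbs_of_nonneg hπnn, hNe]; push_cast; ring
    have hcu : IsUnit c := by
      have : (p : ℤ) * p * c.norm = (p : ℤ) * p * 1 := by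
        rw [mul_one, ← hnorm]; linarith [hN]
      have hc1 : c.norm = 1 := by
        have hpp : (p : ℤ) * p ≠ 0 := mul_ne_zero hp0 hp0
        exact mul_left_cancel₀ hpp this
      exact (Zsqrtd.norm_eq_one_iff' (by norm_num) c).mp hc1
    obtain ⟨u, rfl⟩ := hcu
    have hpdividesπ : ((p : ℤ) : GaussianInt) ∣ π := by
      have hcc : ((p : ℤ) : GaussianInt) = (p : GaussianInt) := by push_cast; rfl
      refine ⟨((u⁻¹ : GaussianInt ˣ) : GaussianInt), ?_⟩
      rw [hcc, hc, mul_assoc, Units.mul_inv, mul_one]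
    have hpre : (p : ℤ) ∣ π.re ∧ (p : ℤ) ∣ π.im := (Zsqrtd.intCast_dvd _ _).mp hpdividesπ
    set g : ℕ := Int.gcd π.re π.im with hg
    have hsum : π.re ^ 2 + π.im ^ 2 = (p : ℤ) * p := by rw [← norm_eq_sum_sq, hnorm]
    have hpg : p ∣ g := by
      have := Int.dvd_coe_gcd hpre.1 hpre.2
      exact_mod_cast this
    have hgp : g ∣ p := by
      have hgdvd : (g : ℤ) ^ 2 ∣ (p : ℤ) ^ 2 := by
        rw [sq (p : ℤ), ← hsum] at *
        exact dvd_add (pow_dvd_pow_of_dvd (Int.gcd_dvd_left _ _) 2)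
          (pow_dvd_pow_of_dvd (Int.gcd_dvd_right _ _) 2)
      have h2 : g ^ 2 ∣ p ^ 2 := by exact_mod_cast hgdvd
      exact (Nat.pow_dvd_pow_iff (by norm_num)).mp h2
    have hge : g = p := Nat.dvd_antisymm hgp hpg
    have hnu : nu π = (p : ℤ) := by
      rw [nu, ← hg, hge, hsum, ← sq]
      rw [sq, Int.mul_ediv_cancel _ hp0]
    refine ⟨hnu, fun n hn => ?_⟩
    have h3 : ((p : ℤ) : GaussianInt) ∣ (n : GaussianInt) := hpdividesπ.trans hn
    exact_mod_cast (Zsqrtd.intCast_dvd_intCast _ _).mp h3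

lemma step_lemma (α₀ δ : GaussianInt) (h : IsCoprime α₀ δ) (π : GaussianInt) (hπ : Prime π)
    (m₁ m₂ : ℤ) (h₁ : π ∣ α₀ + (m₁ : GaussianInt) * δ) (h₂ : π ∣ α₀ + (m₂ : GaussianInt) * δ) :
    π ∣ ((m₁ - m₂ : ℤ) : GaussianInt) := by
  have hsub : (α₀ + (m₁ : GaussianInt) * δ) - (α₀ + (m₂ : GaussianInt) * δ)
      = ((m₁ - m₂ : ℤ) : GaussianInt) * δ := by push_cast; ring
  have hd : π ∣ ((m₁ - m₂ : ℤ) : GaussianInt) * δ := hsub ▸ dvd_sub h₁ h₂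
  rcases hπ.2.2 _ _ hd with h' | h'
  · exact h'
  · exfalso
    have hα : π ∣ α₀ := by
      have he : α₀ = (α₀ + (m₁ : GaussianInt) * δ) - (m₁ : GaussianInt) * δ := by ring
      rw [he]
      exact dvd_sub h₁ (h'.mul_left _)
    exact hπ.not_unit (h.isUnit_of_dvd' hα h')

lemma fiber_card (p : ℕ) (hp : 0 < p) (T : Finset ℤ) (hT : T ⊆ Finset.Icc 1 100)
    (hmod : ∀ j₁ ∈ T, ∀ j₂ ∈ T, (p : ℤ) ∣ j₁ - j₂) :
    T.card ≤ ((99 / (p : ℤ)) + 1).toNat := by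
  have hp' : (0 : ℤ) < p := by exact_mod_cast hp
  have hcard : T.card ≤ (Finset.Icc (0 : ℤ) (99 / (p : ℤ))).card := by
    apply Finset.card_le_card_of_injOn (fun j => (j - 1) / (p : ℤ))
    · intro j hj
      have hj' := Finset.mem_Icc.mp (hT hj)
      rw [Finset.mem_coe, Finset.mem_Icc]
      constructor
      · exact Int.ediv_nonneg (by omega) (le_of_lt hp')
      · exact Int.ediv_le_ediv hp' (by omega)
    · intro j₁ h₁ j₂ h₂ heq
      obtain ⟨m, hm⟩ := hmod j₁ h₁ j₂ h₂
      have he : j₁ - 1 = (j₂ - 1) + (p : ℤ) * m := by linarith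
      simp only [he] at heq
      rw [Int.add_mul_ediv_left _ _ (ne_of_gt hp')] at heq
      have hm0 : m = 0 := by linarith
      rw [hm0, mul_zero] at hm
      omega
  rw [Int.card_Icc] at hcard
  simpa using hcard

end HundredAux

open HundredAux in
theorem hundred_consecutive_has_coprime (α₀ δ : GaussianInt) (h : IsCoprime α₀ δ)
    (hδ : Int.gcd δ.re δ.im = 1)
    -- every Gaussian prime with ν ≤ 100 dividing some term lies over a rational
    -- prime p ≡ 1 (mod 4) (so no prime of norm 2 and no inert prime p ≤ 100 divides any term)
    (h1 : ∀ π : GaussianInt, Prime π → nu π ≤ 100 →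
      (∃ k : ℤ, π ∣ α₀ + (k : GaussianInt) * δ) →
        Prime (nu π) ∧ nu π % 4 = 1)
    -- for each such rational prime there is exactly one prime over it (up to associates)
    -- dividing elements of the sequence
    (h2 : ∀ π π' : GaussianInt, Prime π → Prime π' → nu π ≤ 100 → nu π = nu π' →
      (∃ k : ℤ, π ∣ α₀ + (k : GaussianInt) * δ) →
      (∃ k : ℤ, π' ∣ α₀ + (k : GaussianInt) * δ) → Associated π π')
    (k : ℤ) :
    ∃ j ∈ Finset.Icc (1 : ℤ) 100, ∀ j' ∈ Finset.Icc (1 : ℤ) 100, j' ≠ j →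
      IsCoprime (α₀ + ((k + j : ℤ) : GaussianInt) * δ)
        (α₀ + ((k + j' : ℤ) : GaussianInt) * δ) := by
  by_contra hcon
  push_neg at hcon
  have hδ0 : δ ≠ 0 := by
    rintro rfl
    simp [Int.gcd] at hδ
  -- Claim 1 : every index in the window has a "bad" prime over some p ∈ S
  have claim1 : ∀ j : ℤ, j ∈ Finset.Icc (1 : ℤ) 100 → ∃ p : ℕ, ∃ π : GaussianInt,
      p ∈ S ∧ Prime π ∧ (π ∣ α₀ + ((k + j : ℤ) : GaussianInt) * δ) ∧ nu π = (p : ℤ) ∧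
        (∀ n : ℤ, π ∣ (n : GaussianInt) → (p : ℤ) ∣ n) := by
    intro j hj
    obtain ⟨j', hj', hne, hnc⟩ := hcon j hj
    have hβ0 : α₀ + ((k + j : ℤ) : GaussianInt) * δ ≠ 0 ∨
        α₀ + ((k + j' : ℤ) : GaussianInt) * δ ≠ 0 := by
      by_contra hb
      push_neg at hb
      have : ((k + j : ℤ) : GaussianInt) * δ = ((k + j' : ℤ) : GaussianInt) * δ := by
        have := hb.1.trans hb.2.symm
        linear_combination this
      have h' : (((j - j' : ℤ)) : GaussianInt) * δ = 0 := by push_cast at this ⊢; linear_combination this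
      rcases mul_eq_zero.mp h' with h'' | h''
      · have : (j - j' : ℤ) = 0 := by exact_mod_cast h''
        omega
      · exact hδ0 h''
    obtain ⟨π, hπ, hd, hd'⟩ : ∃ π : GaussianInt, Prime π ∧
        (π ∣ α₀ + ((k + j : ℤ) : GaussianInt) * δ) ∧
        (π ∣ α₀ + ((k + j' : ℤ) : GaussianInt) * δ) := by
      rcases hβ0 with hb | hb
      · exact exists_prime_common _ _ hb hnc
      · obtain ⟨π, hπ, ha, hb'⟩ := exists_prime_common _ _ hb (fun hcop => hnc hcop.symm)
        exact ⟨π, hπ, hb', ha⟩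
    have hdint : π ∣ (((k + j) - (k + j') : ℤ) : GaussianInt) :=
      step_lemma α₀ δ h π hπ (k + j) (k + j') hd hd'
    have hsimp : ((k + j) - (k + j') : ℤ) = j - j' := by ring
    rw [hsimp] at hdint
    have hne0 : (j - j').natAbs ≠ 0 := by
      simp only [ne_eq, Int.natAbs_eq_zero]
      omega
    have hdnat : π ∣ ((j - j').natAbs : GaussianInt) := by
      rcases Int.natAbs_eq (j - j') with he | he
      · rw [he] at hdint
        rwa [Int.cast_natCast] at hdint
      · rw [he] at hdint
        rw [Int.cast_neg, Int.cast_natCast] at hdint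
        exact dvd_neg.mp hdint
    obtain ⟨p, hp, hpm, hpd⟩ := exists_rat_prime_dvd π hπ _ hne0 hdnat
    obtain ⟨hnu, hdvdprop⟩ := key π hπ p hp hpd
    have hple : p ≤ 99 := by
      have hjj : (j - j').natAbs ≤ 99 := by
        rw [Finset.mem_Icc] at hj hj'
        omega
      exact le_trans (Nat.le_of_dvd (Nat.pos_of_ne_zero hne0) hpm) hjj
    have hnule : nu π ≤ 100 := by rw [hnu]; exact_mod_cast (by omega : p ≤ 100)
    obtain ⟨-, hmod4⟩ := h1 π hπ hnule ⟨k + j, hd⟩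
    have hp4 : p % 4 = 1 := by
      rw [hnu] at hmod4
      omega
    exact ⟨p, π, mem_S p (by omega) hp hp4, hπ, hd, hnu, hdvdprop⟩
  choose! fp fπ hfS hfπ hfdvd hfnu hfprop using claim1
  -- counting
  have hfibers := Finset.card_eq_sum_card_fiberwise (f := fp) (s := Finset.Icc (1 : ℤ) 100)
    (t := S) hfS
  have hbound : ∀ q ∈ S, ((Finset.Icc (1 : ℤ) 100).filter (fun j => fp j = q)).card
      ≤ ((99 / (q : ℤ)) + 1).toNat := by
    intro q hq
    obtain ⟨hq0, hq100⟩ := S_pos q hq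
    apply fiber_card q hq0 _ (Finset.filter_subset _ _)
    intro j₁ hj₁ j₂ hj₂
    rw [Finset.mem_filter] at hj₁ hj₂
    obtain ⟨hj₁m, hj₁q⟩ := hj₁
    obtain ⟨hj₂m, hj₂q⟩ := hj₂
    have hnu₁ : nu (fπ j₁) = (q : ℤ) := by rw [hfnu j₁ hj₁m, hj₁q]
    have hnu₂ : nu (fπ j₂) = (q : ℤ) := by rw [hfnu j₂ hj₂m, hj₂q]
    have hassoc : Associated (fπ j₁) (fπ j₂) := by
      apply h2 _ _ (hfπ j₁ hj₁m) (hfπ j₂ hj₂m)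
      · rw [hnu₁]; exact_mod_cast hq100
      · rw [hnu₁, hnu₂]
      · exact ⟨k + j₁, hfdvd j₁ hj₁m⟩
      · exact ⟨k + j₂, hfdvd j₂ hj₂m⟩
    have hdvd₂ : fπ j₁ ∣ α₀ + ((k + j₂ : ℤ) : GaussianInt) * δ :=
      hassoc.dvd.trans (hfdvd j₂ hj₂m)
    have hdint : fπ j₁ ∣ (((k + j₁) - (k + j₂) : ℤ) : GaussianInt) :=
      step_lemma α₀ δ h _ (hfπ j₁ hj₁m) (k + j₁) (k + j₂) (hfdvd j₁ hj₁m) hdvd₂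
    have hsimp : ((k + j₁) - (k + j₂) : ℤ) = j₁ - j₂ := by ring
    rw [hsimp] at hdint
    have := hfprop j₁ hj₁m _ hdint
    rwa [hj₁q] at this
  have h100 : (Finset.Icc (1 : ℤ) 100).card = 100 := by
    rw [Int.card_Icc]
    decide
  have hfinal : (100 : ℕ) ≤ 54 := by
    calc (100 : ℕ) = (Finset.Icc (1 : ℤ) 100).card := h100.symm
      _ = ∑ q ∈ S, ((Finset.Icc (1 : ℤ) 100).filter (fun j => fp j = q)).card := hfibers
      _ ≤ ∑ q ∈ S, ((99 / (q : ℤ)) + 1).toNat := Finset.sum_le_sum hbound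
      _ = 54 := S_sum
  omega
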